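/- Define the modified function Q̃(x, y) = QNC(x, y) + (1/(12xy)) · ( 1/(y-1) - 1/(x-1) ) for real x, y > 1, corresponding to adding the k = 0 term to the series defining F. Then the family (i, j) ↦ |Q̃(p_i, p_j)|, indexed by pairs of positive integers, is NOT summable: ∑_{i,j} |Q̃(p_i, p_j)| = +∞. -/

import Mathlib

open Real

/-- `F(x,y) = ∑_{k=1}^∞ x^{k-1} · y^{-x^k} / (1 - y^{-x^k})²`. -/
noncomputable def F (x y : ℝ) : ℝ :=
  ∑' k : ℕ, x ^ (k : ℝ) * y ^ (-(x ^ ((k : ℝ) + 1))) / (1 - y ^ (-(x ^ ((k : ℝ) + 1)))) ^ 2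

/-- `QNC(x,y) = (1/(12xy)) · ( x(y-1)F(x,y) - y(x-1)F(y,x) )`. -/
noncomputable def QNC (x y : ℝ) : ℝ :=
  1 / (12 * x * y) * (x * (y - 1) * F x y - y * (x - 1) * F y x)

/-- The modified function `Q̃(x,y) = QNC(x,y) + (1/(12xy))·(1/(y-1) - 1/(x-1))`,
corresponding to adding the `k = 0` term to the series defining `F`. -/
noncomputable def QNCtilde (x y : ℝ) : ℝ :=
  QNC x y + 1 / (12 * x * y) * (1 / (y - 1) - 1 / (x - 1))

/-- `nthPrime i` is the `(i+1)`-st prime, so `nthPrime 0 = 2`, `nthPrime 1 = 3`, ... -/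
noncomputable def nthPrime (i : ℕ) : ℕ := Nat.nth Nat.Prime i

/-- The family `(i, j) ↦ |Q̃(p_i, p_j)|` over pairs of positive integers
(reindexed from `0`) is NOT summable: `∑_{i,j} |Q̃(p_i, p_j)| = +∞`. -/
-- nonnegativity of F
lemma F_nonneg (x y : ℝ) (hx : 0 ≤ x) (hy : 0 ≤ y) : 0 ≤ F x y := by
  refine tsum_nonneg fun k => ?_
  have h1 : (0:ℝ) ≤ x ^ ((k:ℝ)) := Real.rpow_nonneg hx _
  have h2 : (0:ℝ) ≤ y ^ (-(x ^ ((k : ℝ) + 1))) := Real.rpow_nonneg hy _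
  positivity

-- key upper bound on F 2 x for x ≥ 13
lemma F_two_le (x : ℝ) (hx : 13 ≤ x) : F 2 x ≤ 2 / (x^2 - 2) := by
  have hx1 : (1:ℝ) ≤ x := by linarith
  have hx0 : (0:ℝ) < x := by linarith
  set r : ℝ := 2 / x^2 with hr
  have hx2 : (2:ℝ) < x^2 := by nlinarith
  have hr0 : 0 ≤ r := by positivity
  have hr1 : r < 1 := by
    rw [hr, div_lt_one (by linarith)]; linarith
  have key : ∀ k : ℕ, (2:ℝ) ^ ((k:ℝ)) * x ^ (-((2:ℝ) ^ ((k : ℝ) + 1))) /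
      (1 - x ^ (-((2:ℝ) ^ ((k : ℝ) + 1)))) ^ 2 ≤ r ^ (k+1) := by
    intro k
    set t : ℝ := x ^ (-((2:ℝ) ^ ((k : ℝ) + 1))) with ht
    have ht0 : 0 ≤ t := Real.rpow_nonneg hx0.le _
    have he2 : (2:ℝ) ≤ (2:ℝ) ^ ((k : ℝ) + 1) := by
      calc (2:ℝ) = 2 ^ (1:ℝ) := by rw [Real.rpow_one]
      _ ≤ 2 ^ ((k : ℝ) + 1) := Real.rpow_le_rpow_of_exponent_le one_le_two
            (by have := Nat.cast_nonneg (α := ℝ) k; linarith)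
    have htle : t ≤ x ^ (-(2:ℝ)) := by
      rw [ht]
      exact Real.rpow_le_rpow_of_exponent_le hx1 (by linarith)
    have hxneg2 : x ^ (-(2:ℝ)) = (x^2)⁻¹ := by
      rw [Real.rpow_neg hx0.le, show (2:ℝ) = ((2:ℕ):ℝ) from by norm_num, Real.rpow_natCast]
    have ht4 : t ≤ 1/4 := by
      rw [hxneg2] at htle
      have : (x^2)⁻¹ ≤ 1/4 := by
        rw [inv_le_iff_one_le_mul₀ (by positivity)]
        nlinarith
      linarith
    have hden : (3/4:ℝ)^2 ≤ (1 - t)^2 := by nlinarith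
    -- bound exponent: 2^(k+1) ≥ 2*(k+1)
    have hexp : (2:ℝ) * ((k:ℝ)+1) ≤ (2:ℝ) ^ ((k : ℝ) + 1) := by
      have : ((2:ℕ) * (k+1) : ℕ) ≤ (2:ℕ)^(k+1) := by
        have hk : k + 1 ≤ 2 ^ k := Nat.lt_two_pow_self (n := k)
        calc 2 * (k+1) ≤ 2 * 2^k := by omega
        _ = 2^(k+1) := by ring
      have h2 : ((2:ℝ)) ^ ((k : ℝ) + 1) = ((2:ℕ)^(k+1) : ℕ) := by
        push_cast
        rw [← Real.rpow_natCast 2 (k+1)]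
        push_cast; ring_nf
      rw [h2]
      exact_mod_cast by exact_mod_cast (by exact_mod_cast this : ((2 * (k+1) : ℕ):ℝ) ≤ ((2^(k+1):ℕ):ℝ))
    have htle2 : t ≤ ((x^2)⁻¹)^(k+1) := by
      have : t ≤ x ^ (-(2 * ((k:ℝ)+1))) := by
        rw [ht]
        exact Real.rpow_le_rpow_of_exponent_le hx1 (by linarith)
      have hrw : x ^ (-(2 * ((k:ℝ)+1))) = ((x^2)⁻¹)^(k+1) := by
        rw [Real.rpow_neg hx0.le]
        rw [show (2 * ((k:ℝ)+1)) = ((2*(k+1) : ℕ) : ℝ) by push_cast; ring]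
        rw [Real.rpow_natCast, inv_pow, pow_mul]
      rw [hrw] at this; exact this
    have h2k : (2:ℝ) ^ ((k:ℝ)) = 2^k := by
      rw [← Real.rpow_natCast 2 k]
    calc (2:ℝ) ^ ((k:ℝ)) * t / (1 - t)^2
        ≤ 2^k * ((x^2)⁻¹)^(k+1) / (3/4)^2 := by
          apply div_le_div₀ (by positivity) _ (by norm_num) hden
          rw [h2k]
          exact mul_le_mul_of_nonneg_left htle2 (by positivity)
      _ ≤ 2 * (2^k * ((x^2)⁻¹)^(k+1)) := by
          rw [div_le_iff₀ (by norm_num)]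
          have : (0:ℝ) ≤ 2^k * ((x^2)⁻¹)^(k+1) := by positivity
          nlinarith
      _ = r ^ (k+1) := by
          rw [hr, div_pow, div_eq_mul_inv, inv_pow]
          ring
  have hsum_g : Summable (fun k : ℕ => r ^ (k+1)) := by
    exact (summable_geometric_of_lt_one hr0 hr1).comp_injective (add_left_injective 1)
  have hsum_f : Summable (fun k : ℕ => (2:ℝ) ^ ((k:ℝ)) * x ^ (-((2:ℝ) ^ ((k : ℝ) + 1))) /
      (1 - x ^ (-((2:ℝ) ^ ((k : ℝ) + 1)))) ^ 2) := by
    refine Summable.of_nonneg_of_le (fun k => ?_) key hsum_g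
    have h2 : (0:ℝ) ≤ x ^ (-((2:ℝ) ^ ((k : ℝ) + 1))) := Real.rpow_nonneg hx0.le _
    positivity
  have htsum_g : ∑' k : ℕ, r ^ (k+1) = 2 / (x^2 - 2) := by
    have : ∑' k : ℕ, r ^ (k+1) = r * (1-r)⁻¹ := by
      simp_rw [pow_succ, mul_comm (r ^ _) r]
      rw [tsum_mul_left, tsum_geometric_of_lt_one hr0 hr1]
    rw [this, hr]
    rw [show (1 - 2/x^2) = (x^2-2)/x^2 by field_simp]
    field_simp
  calc F 2 x ≤ ∑' k : ℕ, r ^ (k+1) := Summable.tsum_le_tsum key hsum_f hsum_g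
  _ = 2 / (x^2 - 2) := htsum_g

lemma QNCtilde_lower (x : ℝ) (hx : 13 ≤ x) : 1/(48*x) ≤ |QNCtilde x 2| := by
  have hx0 : (0:ℝ) < x := by linarith
  have hA : 0 ≤ F x 2 := F_nonneg x 2 hx0.le (by norm_num)
  have hB : F 2 x ≤ 2 / (x^2 - 2) := F_two_le x hx
  have hx2 : (0:ℝ) < x^2 - 2 := by nlinarith
  have hB3 : 2*(x-1)*(F 2 x) ≤ 5/12 := by
    have h1 : 2*(x-1)*(F 2 x) ≤ 2*(x-1)*(2/(x^2-2)) :=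
      mul_le_mul_of_nonneg_left hB (by linarith)
    have h2 : 2*(x-1)*(2/(x^2-2)) ≤ 5/12 := by
      rw [show 2*(x-1)*(2/(x^2-2)) = 4*(x-1)/(x^2-2) from by ring,
        div_le_div_iff₀ hx2 (by norm_num)]
      nlinarith
    linarith
  have h1x : 1/(x-1) ≤ 1/12 := by
    rw [div_le_div_iff₀ (by linarith) (by norm_num)]; linarith
  have hbr : (1:ℝ)/2 ≤ x*(F x 2) - 2*(x-1)*(F 2 x) + (1 - 1/(x-1)) := by
    have : 0 ≤ x * F x 2 := mul_nonneg hx0.le hA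
    linarith
  have hQ : QNCtilde x 2 = 1/(24*x) * (x*(F x 2) - 2*(x-1)*(F 2 x) + (1 - 1/(x-1))) := by
    unfold QNCtilde QNC
    have hx1 : x - 1 ≠ 0 := by intro h; nlinarith
    field_simp
    ring
  have hpos : (0:ℝ) < 1/(24*x) := by positivity
  have : 1/(48*x) ≤ QNCtilde x 2 := by
    rw [hQ, show (1:ℝ)/(48*x) = 1/(24*x) * (1/2) by ring]
    exact mul_le_mul_of_nonneg_left hbr hpos.le
  exact this.trans (le_abs_self _)

lemma not_summable_nth_prime_inv :
    ¬ Summable (fun i : ℕ => ((Nat.nth Nat.Prime i : ℝ))⁻¹) := by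
  intro h
  have hinf : {p | Nat.Prime p}.Infinite := Nat.infinite_setOf_prime
  let e : ℕ ≃ Nat.Primes :=
    Equiv.ofBijective (fun i => ⟨Nat.nth Nat.Prime i, Nat.nth_mem_of_infinite hinf i⟩)
      ⟨fun a b hab => Nat.nth_injective hinf (congrArg Subtype.val hab),
       fun q => ⟨Nat.count Nat.Prime q, Subtype.ext (Nat.nth_count q.2)⟩⟩
  apply Nat.Primes.not_summable_one_div
  exact (Equiv.summable_iff e).mp (h.congr fun i => (one_div _).symm)

set_option maxHeartbeats 1000000 in
theorem not_summable_abs_Rtilde :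
    ¬ Summable (fun ij : ℕ × ℕ =>
      |QNCtilde (nthPrime ij.1 : ℝ) (nthPrime ij.2 : ℝ)|) := by
  intro hs
  have hp0 : nthPrime 0 = 2 := by unfold nthPrime; exact Nat.nth_prime_zero_eq_two
  have hp5 : nthPrime 5 = 13 := by
    have h13 : Nat.Prime 13 := by norm_num
    have : Nat.count Nat.Prime 13 = 5 := by
      simp only [Nat.count_succ, Nat.count_zero]
      norm_num
    simpa [nthPrime, this] using Nat.nth_count h13
  have hinf : {p | Nat.Prime p}.Infinite := Nat.infinite_setOf_prime
  have hmono : ∀ i : ℕ, 13 ≤ nthPrime (i + 5) := by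
    intro i
    calc 13 = nthPrime 5 := hp5.symm
    _ ≤ nthPrime (i + 5) := Nat.nth_monotone hinf (by omega)
  -- restrict to the column j = 0
  have h1 : Summable (fun i : ℕ => |QNCtilde (nthPrime i : ℝ) 2|) := by
    have hcomp := hs.comp_injective (i := fun i : ℕ => (i, 0))
      (fun a b hab => (Prod.mk.injEq _ _ _ _ ▸ hab).1)
    exact hcomp.congr fun i => by simp [Function.comp, hp0]
  have h2 : Summable (fun i : ℕ => |QNCtilde (nthPrime (i+5) : ℝ) 2|) :=
    (summable_nat_add_iff 5).mpr h1
  have h3 : Summable (fun i : ℕ => 1/(48 * (nthPrime (i+5) : ℝ))) := by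
    refine Summable.of_nonneg_of_le (fun i => by positivity) (fun i => ?_) h2
    exact QNCtilde_lower _ (by exact_mod_cast hmono i)
  have h4 : Summable (fun i : ℕ => ((nthPrime (i+5) : ℝ))⁻¹) := by
    have := h3.mul_left 48
    refine this.congr fun i => ?_
    have hpos : (0:ℝ) < (nthPrime (i+5) : ℝ) := by
      have := hmono i; positivity
    field_simp
  have h5 : Summable (fun i : ℕ => ((nthPrime i : ℝ))⁻¹) :=
    (summable_nat_add_iff 5).mp h4
  exact not_summable_nth_prime_inv h5
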